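/- arXiv:2408.08598 — 2 statements merged into one kernel-verified Lean document; each statement's English description precedes it below -/
import Mathlib

section
/- Let k ≥ 1 and let {(X_1, Y_1), …, (X_k, Y_k)} be the partite-set pairs of k bicliques forming a perfect odd cover of the complete graph K_{2k}. If k is odd, then |X_i| ≡ 1 (mod 4) and |Y_i| ≡ 1 (mod 4) for all 1 ≤ i ≤ k. If k is even, then |X_i| ≡ 3 (mod 4) and |Y_i| ≡ 3 (mod 4) for all 1 ≤ i ≤ k. -/
open Finset

/-- The number of bicliques in the collection `f` that cover the pair `(u, v)`. -/
noncomputable def coversCount {V : Type*} {m : ℕ} (f : Fin m → Finset V × Finset V) (u v : V) : ℕ :=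
  Nat.card {i : Fin m // (u ∈ (f i).1 ∧ v ∈ (f i).2) ∨ (u ∈ (f i).2 ∧ v ∈ (f i).1)}

/-- `f` is an odd cover of `G`: a collection of bicliques (pairs of disjoint finite sets of
vertices) covering each edge of `G` an odd number of times and each nonedge an even number
of times. -/
def IsOddCover {V : Type*} (G : SimpleGraph V) {m : ℕ}
    (f : Fin m → Finset V × Finset V) : Prop :=
  (∀ i, Disjoint (f i).1 (f i).2) ∧
  ∀ u v : V, u ≠ v → (G.Adj u v ↔ Odd (coversCount f u v))

/-- `b2 G` is the minimum cardinality of an odd cover of `G`. -/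
noncomputable def b2 {V : Type*} (G : SimpleGraph V) : ℕ :=
  sInf {m : ℕ | ∃ f : Fin m → Finset V × Finset V, IsOddCover G f}

/-- `r2 G` is the rank over `𝔽₂` of the adjacency matrix of `G`. -/
noncomputable def r2 {V : Type*} [Fintype V] (G : SimpleGraph V) : ℕ :=
  letI := Classical.decRel G.Adj
  (SimpleGraph.adjMatrix (ZMod 2) G).rank

/-- Disjoint union of an indexed family of graphs, on the sigma type of the vertex types. -/
def sigmaSum {ι : Type*} {α : ι → Type*} (G : (i : ι) → SimpleGraph (α i)) :
    SimpleGraph ((i : ι) × α i) where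
  Adj x y := ∃ (i : ι) (a b : α i), (G i).Adj a b ∧ x = ⟨i, a⟩ ∧ y = ⟨i, b⟩
  symm := ⟨by rintro x y ⟨i, a, b, h, rfl, rfl⟩; exact ⟨i, b, a, h.symm, rfl, rfl⟩⟩
  loopless := ⟨by
    rintro x ⟨i, a, b, h, rfl, h2⟩
    obtain ⟨-, h3⟩ := Sigma.mk.inj_iff.mp h2
    exact (G i).irrefl (by cases h3; exact h)⟩


set_option linter.unusedSectionVars false
set_option maxHeartbeats 1000000

namespace Stmt15Aux
open Matrix

lemma zmod2_cases : ∀ c : ZMod 2, c = 0 ∨ c = 1 := by decide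

lemma zmod2_mul_eq_one : ∀ p q : ZMod 2, p * q = 1 → p = 1 ∧ q = 1 := by decide

lemma castmod2 (a : ℕ) : ((a % 2 : ℕ) : ZMod 2) = (a : ZMod 2) := ZMod.natCast_mod a 2

lemma castmod4 (a : ℕ) : ((a % 4 : ℕ) : ZMod 2) = (a : ZMod 2) := by
  conv_rhs => rw [← Nat.div_add_mod a 4]
  push_cast
  rw [show ((4 : ZMod 2)) = 0 by decide]
  ring

lemma choose2_zmod (n : ℕ) : ((n.choose 2 : ℕ) : ZMod 2) = if n % 4 ≤ 1 then 0 else 1 := by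
  induction n with
  | zero => simp
  | succ n ih =>
    have h : (n+1).choose 2 = n.choose 2 + n := by
      rw [Nat.choose_succ_succ, Nat.choose_one_right, Nat.add_comm]
    rw [h, Nat.cast_add, ih, ← castmod4 n]
    have h4 : n % 4 = 0 ∨ n % 4 = 1 ∨ n % 4 = 2 ∨ n % 4 = 3 := by omega
    rcases h4 with h4 | h4 | h4 | h4
    · rw [h4, show (n+1) % 4 = 1 by omega]; decide
    · rw [h4, show (n+1) % 4 = 2 by omega]; decide
    · rw [h4, show (n+1) % 4 = 3 by omega]; decide
    · rw [h4, show (n+1) % 4 = 0 by omega]; decide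

lemma choose2_symmdiff (a b m : ℕ) (ha : m ≤ a) (hb : m ≤ b) :
    (((a + b - 2 * m).choose 2 : ℕ) : ZMod 2)
      = ((a.choose 2 : ℕ) : ZMod 2) + ((b.choose 2 : ℕ) : ZMod 2)
        + (a : ZMod 2) * (b : ZMod 2) + (m : ZMod 2) := by
  rw [choose2_zmod, choose2_zmod, choose2_zmod, ← castmod4 a, ← castmod4 b, ← castmod4 m]
  have h4a : a % 4 = 0 ∨ a % 4 = 1 ∨ a % 4 = 2 ∨ a % 4 = 3 := by omega
  have h4b : b % 4 = 0 ∨ b % 4 = 1 ∨ b % 4 = 2 ∨ b % 4 = 3 := by omega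
  have h4m : m % 4 = 0 ∨ m % 4 = 1 ∨ m % 4 = 2 ∨ m % 4 = 3 := by omega
  have h4c : (a+b-2*m) % 4 = 0 ∨ (a+b-2*m) % 4 = 1 ∨ (a+b-2*m) % 4 = 2 ∨ (a+b-2*m) % 4 = 3 := by omega
  rcases h4a with h|h|h|h <;> rcases h4b with h'|h'|h'|h' <;> rcases h4m with h''|h''|h''|h'' <;>
    rcases h4c with hc|hc|hc|hc <;> rw [h, h', h'', hc] <;>
    first
      | decide
      | (exfalso; omega)



section QF
variable {V : Type*} [Fintype V] [DecidableEq V]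

def suppF (u : V → ZMod 2) : Finset V := univ.filter (fun a => u a = 1)

def qf (u : V → ZMod 2) : ZMod 2 := (((suppF u).card.choose 2 : ℕ) : ZMod 2)

def Bf (u w : V → ZMod 2) : ZMod 2 := (∑ a, u a) * (∑ a, w a) + ∑ a, u a * w a

lemma sum_eq_card (u : V → ZMod 2) : (∑ a, u a) = ((suppF u).card : ZMod 2) := by
  rw [suppF, ← Finset.sum_boole]
  exact Finset.sum_congr rfl fun a _ => by rcases zmod2_cases (u a) with h | h <;> simp [h]

lemma inner_eq_card (u w : V → ZMod 2) :
    (∑ a, u a * w a) = (((suppF u ∩ suppF w).card : ℕ) : ZMod 2) := by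
  have h : suppF u ∩ suppF w = univ.filter (fun a => u a = 1 ∧ w a = 1) := by
    simp [suppF, Finset.filter_and]
  rw [h, ← Finset.sum_boole]
  refine Finset.sum_congr rfl fun a _ => ?_
  rcases zmod2_cases (u a) with h1 | h1 <;> rcases zmod2_cases (w a) with h2 | h2 <;>
    simp [h1, h2]

lemma Bf_comm (u w : V → ZMod 2) : Bf u w = Bf w u := by
  unfold Bf
  rw [mul_comm]
  congr 1
  exact Finset.sum_congr rfl fun a _ => mul_comm _ _

lemma Bf_sum_right {ι : Type*} (u : V → ZMod 2) (s : Finset ι) (w : ι → V → ZMod 2) :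
    Bf u (∑ i ∈ s, w i) = ∑ i ∈ s, Bf u (w i) := by
  unfold Bf
  simp only [Finset.sum_apply]
  rw [show (∑ a, ∑ i ∈ s, w i a) = ∑ i ∈ s, ∑ a, w i a from Finset.sum_comm]
  rw [Finset.mul_sum]
  rw [show (∑ a, u a * ∑ i ∈ s, w i a) = ∑ i ∈ s, ∑ a, u a * w i a from by
        simp_rw [Finset.mul_sum]; exact Finset.sum_comm]
  rw [← Finset.sum_add_distrib]

lemma Bf_sum_left {ι : Type*} (s : Finset ι) (w : ι → V → ZMod 2) (u : V → ZMod 2) :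
    Bf (∑ i ∈ s, w i) u = ∑ i ∈ s, Bf (w i) u := by
  rw [Bf_comm, Bf_sum_right]
  exact Finset.sum_congr rfl fun i _ => Bf_comm _ _

lemma Bf_smul_right (c : ZMod 2) (u w : V → ZMod 2) :
    Bf u (fun a => c * w a) = c * Bf u w := by
  unfold Bf
  have h1 : (∑ a : V, c * w a) = c * ∑ a : V, w a := (Finset.mul_sum _ _ _).symm
  have h2 : (∑ a : V, u a * (c * w a)) = c * ∑ a : V, u a * w a := by
    rw [Finset.mul_sum]
    exact Finset.sum_congr rfl fun a _ => by ring
  rw [h1, h2]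
  ring

lemma Bf_smul_left (c : ZMod 2) (u w : V → ZMod 2) :
    Bf (fun a => c * u a) w = c * Bf u w := by
  rw [Bf_comm, Bf_smul_right, Bf_comm]

lemma Bf_add_right (u w₁ w₂ : V → ZMod 2) :
    Bf u (w₁ + w₂) = Bf u w₁ + Bf u w₂ := by
  unfold Bf
  simp only [Pi.add_apply]
  rw [Finset.sum_add_distrib]
  rw [show (∑ a : V, u a * (w₁ a + w₂ a)) = (∑ a : V, u a * w₁ a) + ∑ a : V, u a * w₂ a from by
        rw [← Finset.sum_add_distrib]; exact Finset.sum_congr rfl fun a _ => by ring]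
  ring

lemma Bf_add_left (u₁ u₂ w : V → ZMod 2) :
    Bf (u₁ + u₂) w = Bf u₁ w + Bf u₂ w := by
  rw [Bf_comm, Bf_add_right, Bf_comm w u₁, Bf_comm w u₂]

lemma qf_zero : qf (0 : V → ZMod 2) = 0 := by
  have h : suppF (0 : V → ZMod 2) = ∅ := by
    ext a; simp [suppF]
  simp [qf, h]

lemma qf_smul (c : ZMod 2) (u : V → ZMod 2) : qf (fun a => c * u a) = c * qf u := by
  rcases zmod2_cases c with h | h <;> subst h
  · rw [show (fun a => (0:ZMod 2) * u a) = 0 from by funext a; simp, qf_zero, zero_mul]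
  · simp only [one_mul]


lemma qf_add (u w : V → ZMod 2) : qf (u + w) = qf u + qf w + Bf u w := by
  have hsupp : suppF (u + w) = (suppF u ∪ suppF w) \ (suppF u ∩ suppF w) := by
    ext a
    have h : ∀ p q : ZMod 2, (p + q = 1) ↔ ((p = 1 ∨ q = 1) ∧ ¬(p = 1 ∧ q = 1)) := by decide
    simp only [suppF, mem_filter, mem_univ, true_and, mem_sdiff, mem_union, mem_inter,
      Pi.add_apply]
    constructor
    · intro hh; exact (h (u a) (w a)).mp hh |>.imp id (fun x => by tauto)
    · intro hh; exact (h (u a) (w a)).mpr ⟨hh.1, by tauto⟩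
  have hm1 : (suppF u ∩ suppF w).card ≤ (suppF u).card := card_le_card inter_subset_left
  have hm2 : (suppF u ∩ suppF w).card ≤ (suppF w).card := card_le_card inter_subset_right
  have hcard : (suppF (u + w)).card
      = (suppF u).card + (suppF w).card - 2 * (suppF u ∩ suppF w).card := by
    rw [hsupp, card_sdiff_of_subset (inter_subset_left.trans subset_union_left)]
    have h := Finset.card_union_add_card_inter (suppF u) (suppF w)
    omega
  rw [qf, hcard, choose2_symmdiff _ _ _ hm1 hm2, Bf, sum_eq_card u, sum_eq_card w,
    inner_eq_card]
  simp only [qf]; ring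

lemma qf_sum {ι : Type*} (s : Finset ι) (w : ι → V → ZMod 2)
    (h : ∀ i ∈ s, ∀ j ∈ s, i ≠ j → Bf (w i) (w j) = 0) :
    qf (∑ i ∈ s, w i) = ∑ i ∈ s, qf (w i) := by
  induction s using Finset.cons_induction with
  | empty => simp [qf_zero]
  | cons a s ha ih =>
    rw [Finset.sum_cons, Finset.sum_cons, qf_add, Bf_sum_right,
      ih (fun i hi j hj hij => h i (mem_cons_of_mem hi) j (mem_cons_of_mem hj) hij)]
    have hz : (∑ i ∈ s, Bf (w a) (w i)) = 0 :=
      Finset.sum_eq_zero fun i hi =>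
        h a (mem_cons_self a s) i (mem_cons_of_mem hi) (by rintro rfl; exact ha hi)
    rw [hz, add_zero]

end QF



lemma zmod2_cancel : ∀ X c : ZMod 2, X + c = 0 → X = c := by decide

lemma key_matrix {n : Type*} [Fintype n] [DecidableEq n]
    (P S M : Matrix n n (ZMod 2)) (hS : S * S = 1) (hM : M * M = 1)
    (h : P * S * Pᵀ = M) : Pᵀ * M * P = S := by
  have h1 : P * (S * Pᵀ * M) = 1 := by
    rw [show P * (S * Pᵀ * M) = P * S * Pᵀ * M from by simp only [Matrix.mul_assoc], h, hM]
  have h2 : (S * Pᵀ * M) * P = 1 := mul_eq_one_comm.mp h1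
  calc Pᵀ * M * P = S * S * (Pᵀ * M * P) := by rw [hS, Matrix.one_mul]
    _ = S * (S * Pᵀ * M * P) := by simp only [Matrix.mul_assoc]
    _ = S * 1 := by rw [show S * Pᵀ * M * P = 1 from h2]
    _ = S := Matrix.mul_one S

section Main
variable {k : ℕ} (f : Fin k → Finset (Fin (2*k)) × Finset (Fin (2*k)))

def xv (i : Fin k) : Fin (2*k) → ZMod 2 := fun v => if v ∈ (f i).1 then 1 else 0
def yv (i : Fin k) : Fin (2*k) → ZMod 2 := fun v => if v ∈ (f i).2 then 1 else 0
def Mk (k : ℕ) : Matrix (Fin (2*k)) (Fin (2*k)) (ZMod 2) :=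
  Matrix.of fun u v => if u = v then 0 else 1
def zf : Fin k ⊕ Fin k → Fin (2*k) → ZMod 2 := Sum.elim (xv f) (yv f)
def Sk (k : ℕ) : Matrix (Fin k ⊕ Fin k) (Fin k ⊕ Fin k) (ZMod 2) := Matrix.fromBlocks 0 1 1 0
def Pk : Matrix (Fin (2*k)) (Fin k ⊕ Fin k) (ZMod 2) := Matrix.of fun v s => zf f s v
def ek (k : ℕ) : (Fin k ⊕ Fin k) ≃ Fin (2*k) := finSumFinEquiv.trans (finCongr (two_mul k).symm)

lemma hSS : Sk k * Sk k = 1 := by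
  unfold Sk
  rw [Matrix.fromBlocks_multiply]
  simp [Matrix.fromBlocks_one]

lemma hMk_apply (u v : Fin (2*k)) : Mk k u v = if u = v then 0 else 1 := rfl

-- M*M = 1
lemma hMM (hk : 1 ≤ k) : Mk k * Mk k = 1 := by
  ext u w
  rw [Matrix.mul_apply]
  have h : ∀ v, Mk k u v * Mk k v w = if (u ≠ v ∧ v ≠ w) then 1 else 0 := by
    intro v
    by_cases h1 : u = v <;> by_cases h2 : v = w <;> simp [hMk_apply, h1, h2]
  simp_rw [h]
  rw [Finset.sum_boole]
  by_cases h : u = w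
  · subst h
    have he : univ.filter (fun v : Fin (2*k) => u ≠ v ∧ v ≠ u) = univ \ {u} := by
      ext v
      simp [ne_comm, eq_comm]
    rw [he, Finset.card_sdiff_of_subset (by simp), Finset.card_univ, Matrix.one_apply_eq]
    simp only [Fintype.card_fin, Finset.card_singleton]
    rw [← castmod2]
    rw [show (2*k - 1) % 2 = 1 from by omega]
    rfl
  · have he : univ.filter (fun v : Fin (2*k) => u ≠ v ∧ v ≠ w) = univ \ {u, w} := by
      ext v
      simp [ne_comm, eq_comm]
    rw [he, Finset.card_sdiff_of_subset (by simp), Finset.card_univ, Matrix.one_apply_ne h]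
    rw [Finset.card_insert_of_notMem (by simp [h]), Finset.card_singleton]
    simp only [Fintype.card_fin]
    rw [← castmod2]
    rw [show (2*k - (1+1)) % 2 = 0 from by omega]
    rfl

lemma hPSP (hM : ∀ u v, Mk k u v = ∑ i, (xv f i u * yv f i v + yv f i u * xv f i v)) :
    Pk f * Sk k * (Pk f)ᵀ = Mk k := by
  ext u v
  rw [Matrix.mul_apply]
  simp_rw [Matrix.mul_apply, Matrix.transpose_apply]
  rw [hM u v]
  rw [Fintype.sum_sum_type]
  simp only [Pk, Sk, zf, Matrix.of_apply, Fintype.sum_sum_type, Sum.elim_inl, Sum.elim_inr,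
    Matrix.fromBlocks_apply₁₁, Matrix.fromBlocks_apply₁₂, Matrix.fromBlocks_apply₂₁,
    Matrix.fromBlocks_apply₂₂, Matrix.zero_apply, Matrix.one_apply, mul_zero, zero_mul,
    mul_ite, mul_one, Finset.sum_const_zero, zero_add, add_zero, Finset.sum_ite_eq,
    Finset.sum_ite_eq', Finset.mem_univ, if_true]
  rw [← Finset.sum_add_distrib]
  exact Finset.sum_congr rfl fun i _ => by ring

lemma hQ (hk : 1 ≤ k) (hM : ∀ u v, Mk k u v = ∑ i, (xv f i u * yv f i v + yv f i u * xv f i v)) :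
    ∀ s t, (∑ u, ∑ v, zf f s u * Mk k u v * zf f t v) = Sk k s t := by
  have hps := hPSP f hM
  set e := ek k with he
  set P2 : Matrix (Fin (2*k)) (Fin (2*k)) (ZMod 2) := (Pk f).submatrix id e.symm with hP2
  set S2 : Matrix (Fin (2*k)) (Fin (2*k)) (ZMod 2) := (Sk k).submatrix e.symm e.symm with hS2d
  have hS2 : S2 * S2 = 1 := by
    rw [hS2d, Matrix.submatrix_mul_equiv (Sk k) (Sk k) _ e.symm _, hSS,
      Matrix.submatrix_one_equiv]
  have hP2SP : P2 * S2 * P2ᵀ = Mk k := by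
    rw [hP2, hS2d, Matrix.submatrix_mul_equiv (Pk f) (Sk k) id e.symm _,
      Matrix.transpose_submatrix, Matrix.submatrix_mul_equiv _ _ _ e.symm id, hps,
      Matrix.submatrix_id_id]
  have hfin : P2ᵀ * Mk k * P2 = S2 := key_matrix P2 S2 (Mk k) hS2 (hMM hk) hP2SP
  intro s t
  have h1 : (P2ᵀ * Mk k * P2) (e s) (e t) = S2 (e s) (e t) := by rw [hfin]
  have h2 : S2 (e s) (e t) = Sk k s t := by
    rw [hS2d, Matrix.submatrix_apply, Equiv.symm_apply_apply, Equiv.symm_apply_apply]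
  rw [← h1.trans h2]
  rw [Matrix.mul_apply]
  simp_rw [Matrix.mul_apply, Matrix.transpose_apply, hP2, Matrix.submatrix_apply,
    Equiv.symm_apply_apply, id_eq]
  rw [Finset.sum_comm]
  refine Finset.sum_congr rfl fun v _ => ?_
  rw [Finset.sum_mul]
  refine Finset.sum_congr rfl fun u _ => ?_
  simp [Pk]

lemma hBfM (u w : Fin (2*k) → ZMod 2) :
    (∑ a, ∑ b, u a * Mk k a b * w b) = Bf u w := by
  have h : ∀ a b, u a * Mk k a b * w b = u a * w b + (if a = b then u a * w b else 0) := by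
    intro a b
    by_cases hab : a = b <;> simp [hMk_apply, hab]
    subst hab
    rw [CharTwo.add_self_eq_zero]
  simp_rw [h]
  simp only [Finset.sum_add_distrib]
  rw [Bf, Finset.sum_mul_sum]
  congr 1
  refine Finset.sum_congr rfl fun a _ => ?_
  rw [Finset.sum_ite_eq]
  simp

lemma hMcover (hd : ∀ i, Disjoint (f i).1 (f i).2)
    (hoddc : ∀ u v : Fin (2*k), u ≠ v → Odd (coversCount f u v)) :
    ∀ u v, Mk k u v = ∑ i, (xv f i u * yv f i v + yv f i u * xv f i v) := by
  intro u v
  by_cases huv : u = v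
  · subst huv
    rw [hMk_apply, if_pos rfl]
    symm
    refine Finset.sum_eq_zero fun i _ => ?_
    rw [mul_comm (yv f i u) (xv f i u), CharTwo.add_self_eq_zero]
  · have hterm : ∀ i, xv f i u * yv f i v + yv f i u * xv f i v
        = if (u ∈ (f i).1 ∧ v ∈ (f i).2) ∨ (u ∈ (f i).2 ∧ v ∈ (f i).1) then 1 else 0 := by
      intro i
      have h13 := Finset.disjoint_left.mp (hd i)
      by_cases h1 : u ∈ (f i).1 <;> by_cases h2 : v ∈ (f i).2 <;>
        by_cases h3 : u ∈ (f i).2 <;> by_cases h4 : v ∈ (f i).1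
      all_goals first
        | exact absurd h3 (h13 h1)
        | exact absurd h2 (h13 h4)
        | simp [xv, yv, h1, h2, h3, h4]
    simp_rw [hterm]
    rw [Finset.sum_boole]
    have hc : (univ.filter (fun i : Fin k =>
        (u ∈ (f i).1 ∧ v ∈ (f i).2) ∨ (u ∈ (f i).2 ∧ v ∈ (f i).1))).card
        = coversCount f u v := by
      rw [coversCount, Nat.card_eq_fintype_card, Fintype.card_subtype]
    rw [hc, hMk_apply, if_neg huv, ← castmod2,
      show coversCount f u v % 2 = 1 from Nat.odd_iff.mp (hoddc u v huv)]
    rfl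

lemma suppF_xv (i : Fin k) : suppF (xv f i) = (f i).1 := by
  ext v
  by_cases h : v ∈ (f i).1 <;> simp [suppF, xv, h]

lemma suppF_yv (i : Fin k) : suppF (yv f i) = (f i).2 := by
  ext v
  by_cases h : v ∈ (f i).2 <;> simp [suppF, yv, h]

section Vals
variable (hk : 1 ≤ k) (hd : ∀ i, Disjoint (f i).1 (f i).2)
  (hM : ∀ u v : Fin (2*k), Mk k u v = ∑ i, (xv f i u * yv f i v + yv f i u * xv f i v))

include hk hM

lemma hxx : ∀ i j, Bf (xv f i) (xv f j) = 0 := by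
  intro i j
  have h := hQ f hk hM (Sum.inl i) (Sum.inl j)
  rw [hBfM] at h
  simp only [zf, Sum.elim_inl, Sum.elim_inr] at h
  rw [h]
  simp [Sk]

lemma hyy : ∀ i j, Bf (yv f i) (yv f j) = 0 := by
  intro i j
  have h := hQ f hk hM (Sum.inr i) (Sum.inr j)
  rw [hBfM] at h
  simp only [zf, Sum.elim_inl, Sum.elim_inr] at h
  rw [h]
  simp [Sk]

lemma hxy : ∀ i j, Bf (xv f i) (yv f j) = if i = j then 1 else 0 := by
  intro i j
  have h := hQ f hk hM (Sum.inl i) (Sum.inr j)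
  rw [hBfM] at h
  simp only [zf, Sum.elim_inl, Sum.elim_inr] at h
  rw [h]
  simp [Sk, Matrix.one_apply]

lemma hyx : ∀ i j, Bf (yv f i) (xv f j) = if i = j then 1 else 0 := by
  intro i j
  rw [Bf_comm, hxy f hk hM j i]
  simp [eq_comm]

include hd

lemma hcx : ∀ i, (((f i).1.card : ℕ) : ZMod 2) = 1 ∧ (((f i).2.card : ℕ) : ZMod 2) = 1 := by
  intro i
  have h := hxy f hk hM i i
  rw [if_pos rfl, Bf, sum_eq_card, sum_eq_card, inner_eq_card, suppF_xv, suppF_yv] at h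
  rw [Finset.disjoint_iff_inter_eq_empty.mp (hd i)] at h
  simp only [Finset.card_empty, Nat.cast_zero, add_zero] at h
  exact zmod2_mul_eq_one _ _ h

lemma hpoint : ∀ i v, xv f i v * yv f i v = 0 := by
  intro i v
  by_cases h1 : v ∈ (f i).1
  · have h2 : v ∉ (f i).2 := Finset.disjoint_left.mp (hd i) h1
    simp [xv, yv, h1, h2]
  · simp [xv, yv, h1]

lemma hone : ∀ u, (∑ i, (xv f i u + yv f i u)) = 1 := by
  intro u
  have hrow : (∑ v, Mk k u v) = 1 := by
    have h : ∀ v, Mk k u v = if u = v then 0 else 1 := fun v => rfl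
    have h2 : ∀ x : Fin (2*k), (if u = x then (0:ZMod 2) else 1) = 1 + (if u = x then 1 else 0) := by
      intro x
      by_cases hx : u = x <;> simp [hx]
      rw [CharTwo.add_self_eq_zero]
    simp_rw [h, h2]
    rw [Finset.sum_add_distrib, Finset.sum_const, Finset.sum_ite_eq, Finset.card_univ]
    have h3 : ((Fintype.card (Fin (2*k))) • (1 : ZMod 2)) = 0 := by
      rw [Fintype.card_fin, nsmul_eq_mul, mul_one, ← castmod2,
        show (2*k) % 2 = 0 from by omega]
      rfl
    rw [h3, zero_add]
    simp
  have hexp : (∑ v, Mk k u v) = ∑ i, (xv f i u + yv f i u) := by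
    simp_rw [hM u]
    rw [Finset.sum_comm]
    refine Finset.sum_congr rfl fun i _ => ?_
    rw [Finset.sum_add_distrib, ← Finset.mul_sum, ← Finset.mul_sum,
      sum_eq_card, sum_eq_card, suppF_xv, suppF_yv, (hcx f hk hd hM i).1,
      (hcx f hk hd hM i).2, mul_one, mul_one]
  rw [← hexp, hrow]

lemma hMx : ∀ i u, (∑ v, Mk k u v * xv f i v) = 1 + xv f i u := by
  intro i u
  have h : ∀ v, Mk k u v * xv f i v = xv f i v + (if u = v then xv f i v else 0) := by
    intro v
    by_cases hv : u = v <;> simp [hMk_apply, hv]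
    subst hv
    rw [CharTwo.add_self_eq_zero]
  simp_rw [h]
  rw [Finset.sum_add_distrib, Finset.sum_ite_eq, sum_eq_card, suppF_xv,
    (hcx f hk hd hM i).1]
  simp

lemma hMy : ∀ i u, (∑ v, Mk k u v * yv f i v) = 1 + yv f i u := by
  intro i u
  have h : ∀ v, Mk k u v * yv f i v = yv f i v + (if u = v then yv f i v else 0) := by
    intro v
    by_cases hv : u = v <;> simp [hMk_apply, hv]
    subst hv
    rw [CharTwo.add_self_eq_zero]
  simp_rw [h]
  rw [Finset.sum_add_distrib, Finset.sum_ite_eq, sum_eq_card, suppF_yv,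
    (hcx f hk hd hM i).2]
  simp

lemma hev : ∀ v u : Fin (2*k), (if u = v then (1:ZMod 2) else 0)
    = 1 + ∑ i, (yv f i v * xv f i u + xv f i v * yv f i u) := by
  intro v u
  have h0 : (if u = v then (1:ZMod 2) else 0) = (Mk k * Mk k) u v := by
    rw [hMM hk, Matrix.one_apply]
  rw [h0, Matrix.mul_apply]
  have h1 : ∀ w, Mk k u w * Mk k w v
      = ∑ i, (yv f i v * (Mk k u w * xv f i w) + xv f i v * (Mk k u w * yv f i w)) := by
    intro w
    rw [hM w v, Finset.mul_sum]
    refine Finset.sum_congr rfl fun i _ => by ring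
  simp_rw [h1]
  rw [Finset.sum_comm]
  have h2 : ∀ i, (∑ w, (yv f i v * (Mk k u w * xv f i w) + xv f i v * (Mk k u w * yv f i w)))
      = (xv f i v + yv f i v) + (yv f i v * xv f i u + xv f i v * yv f i u) := by
    intro i
    rw [Finset.sum_add_distrib, ← Finset.mul_sum, ← Finset.mul_sum,
      hMx f hk hd hM i u, hMy f hk hd hM i u]
    ring
  simp_rw [h2]
  rw [Finset.sum_add_distrib, hone f hk hd hM v]

lemma qf_one : qf (fun _ : Fin (2*k) => (1 : ZMod 2)) = (k : ZMod 2) := by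
  have hs : suppF (fun _ : Fin (2*k) => (1 : ZMod 2)) = univ := by
    ext a; simp [suppF]
  rw [qf, hs, Finset.card_univ, Fintype.card_fin, choose2_zmod, ← castmod2 k]
  rcases Nat.even_or_odd k with hke | hko
  · have h2 : k % 2 = 0 := Nat.even_iff.mp hke
    rw [show (2*k) % 4 = 0 from by omega, h2]
    simp
  · have h2 : k % 2 = 1 := Nat.odd_iff.mp hko
    rw [show (2*k) % 4 = 2 from by omega, h2]
    simp

lemma hG : (∑ i, (qf (xv f i) + qf (yv f i))) = 0 := by
  have hcross : ∀ i ∈ (univ : Finset (Fin k)), ∀ j ∈ (univ : Finset (Fin k)), i ≠ j →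
      Bf (xv f i + yv f i) (xv f j + yv f j) = 0 := by
    intro i _ j _ hij
    rw [Bf_add_left, Bf_add_right, Bf_add_right, hxx f hk hM, hyy f hk hM,
      hxy f hk hM, hyx f hk hM, if_neg hij]
    ring
  have hsum : (∑ i, (xv f i + yv f i)) = (fun _ : Fin (2*k) => (1 : ZMod 2)) := by
    funext u
    rw [Finset.sum_apply]
    simp only [Pi.add_apply]
    exact hone f hk hd hM u
  have h1 : qf (fun _ : Fin (2*k) => (1 : ZMod 2)) = ∑ i, qf (xv f i + yv f i) := by
    rw [← hsum, qf_sum _ _ hcross]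
  rw [qf_one f hk hd hM] at h1
  have h2 : ∀ i : Fin k, qf (xv f i + yv f i) = qf (xv f i) + qf (yv f i) + 1 := by
    intro i
    rw [qf_add, hxy f hk hM i i, if_pos rfl]
  simp_rw [h2] at h1
  rw [Finset.sum_add_distrib, Finset.sum_const, Finset.card_univ, Fintype.card_fin,
    nsmul_eq_mul, mul_one, ← castmod2 k] at h1
  rcases Nat.even_or_odd k with hke | hko
  · rw [show k % 2 = 0 from Nat.even_iff.mp hke] at h1
    simpa using h1.symm
  · rw [show k % 2 = 1 from Nat.odd_iff.mp hko, Nat.cast_one] at h1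
    have h6 : ∀ X : ZMod 2, (1:ZMod 2) = X + 1 → X = 0 := by decide
    exact h6 _ h1

lemma hT : ∀ v, (∑ i, (yv f i v * qf (xv f i) + xv f i v * qf (yv f i)))
    = (k : ZMod 2) + 1 := by
  intro v
  set w : Fin k → Fin (2*k) → ZMod 2 := fun i =>
    (fun u => (1 + yv f i v) * xv f i u) + (fun u => (1 + xv f i v) * yv f i u) with hw
  have hcross : ∀ i ∈ (univ : Finset (Fin k)), ∀ j ∈ (univ : Finset (Fin k)), i ≠ j →
      Bf (w i) (w j) = 0 := by
    intro i _ j _ hij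
    rw [hw]
    simp only
    rw [Bf_add_left, Bf_add_right, Bf_add_right, Bf_smul_left, Bf_smul_left, Bf_smul_left,
      Bf_smul_left, Bf_smul_right, Bf_smul_right, Bf_smul_right, Bf_smul_right,
      hxx f hk hM, hyy f hk hM, hxy f hk hM, hyx f hk hM, if_neg hij]
    ring
  have hsum : (∑ i, w i) = (fun u : Fin (2*k) => if u = v then (1:ZMod 2) else 0) := by
    funext u
    rw [Finset.sum_apply]
    simp only [hw, Pi.add_apply]
    have hterm : ∀ i : Fin k, ((1 + yv f i v) * xv f i u + (1 + xv f i v) * yv f i u)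
        = (xv f i u + yv f i u) + (yv f i v * xv f i u + xv f i v * yv f i u) := by
      intro i; ring
    simp_rw [hterm]
    rw [Finset.sum_add_distrib, hone f hk hd hM u, ← hev f hk hd hM v u]
  have hqev : qf (fun u : Fin (2*k) => if u = v then (1:ZMod 2) else 0) = 0 := by
    have hs : suppF (fun u : Fin (2*k) => if u = v then (1:ZMod 2) else 0) = {v} := by
      ext a
      by_cases ha : a = v <;> simp [suppF, ha]
    rw [qf, hs]
    simp
  have h1 : (∑ i, qf (w i)) = 0 := by
    rw [← qf_sum _ _ hcross, hsum, hqev]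
  have h2 : ∀ i : Fin k, qf (w i)
      = ((qf (xv f i) + qf (yv f i)) + (yv f i v * qf (xv f i) + xv f i v * qf (yv f i)))
        + (1 + (xv f i v + yv f i v)) := by
    intro i
    rw [hw]
    simp only
    rw [qf_add, qf_smul, qf_smul, Bf_smul_left, Bf_smul_right, hxy f hk hM i i, if_pos rfl]
    have hp : xv f i v * yv f i v = 0 := hpoint f hk hd hM i v
    have expand : (1 + yv f i v) * qf (xv f i) + (1 + xv f i v) * qf (yv f i)
        + (1 + yv f i v) * ((1 + xv f i v) * 1)
        = ((qf (xv f i) + qf (yv f i)) + (yv f i v * qf (xv f i) + xv f i v * qf (yv f i)))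
          + (1 + (xv f i v + yv f i v)) + yv f i v * xv f i v := by ring
    rw [expand, mul_comm (yv f i v) (xv f i v), hp, add_zero]
  simp_rw [h2] at h1
  rw [Finset.sum_add_distrib, Finset.sum_add_distrib, hG f hk hd hM, zero_add] at h1
  have hc : (∑ i : Fin k, ((1:ZMod 2) + (xv f i v + yv f i v))) = (k : ZMod 2) + 1 := by
    rw [Finset.sum_add_distrib, Finset.sum_const, Finset.card_univ, Fintype.card_fin,
      nsmul_eq_mul, mul_one, hone f hk hd hM v]
  rw [hc] at h1
  exact zmod2_cancel _ _ h1

lemma hab : ∀ j, qf (xv f j) = (k : ZMod 2) + 1 ∧ qf (yv f j) = (k : ZMod 2) + 1 := by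
  set c : ZMod 2 := (k : ZMod 2) + 1 with hcdef
  set W : Fin k → Fin (2*k) → ZMod 2 := fun i =>
    (fun u => (qf (yv f i) + c) * xv f i u) + (fun u => (qf (xv f i) + c) * yv f i u) with hWdef
  have hW0 : (∑ i, W i) = (fun _ : Fin (2*k) => (0 : ZMod 2)) := by
    funext v
    rw [Finset.sum_apply]
    simp only [hWdef, Pi.add_apply]
    have hterm : ∀ i : Fin k,
        ((qf (yv f i) + c) * xv f i v + (qf (xv f i) + c) * yv f i v)
        = (yv f i v * qf (xv f i) + xv f i v * qf (yv f i)) + c * (xv f i v + yv f i v) := by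
      intro i; ring
    simp_rw [hterm]
    rw [Finset.sum_add_distrib, hT f hk hd hM v, ← Finset.mul_sum, hone f hk hd hM v,
      mul_one, ← hcdef, CharTwo.add_self_eq_zero]
  have hBzero : ∀ u : Fin (2*k) → ZMod 2, Bf (fun _ : Fin (2*k) => (0:ZMod 2)) u = 0 := by
    intro u
    unfold Bf
    simp
  intro j
  constructor
  · have h1 : Bf (∑ i, W i) (xv f j) = 0 := by rw [hW0]; exact hBzero _
    rw [Bf_sum_left] at h1
    have h2 : ∀ i : Fin k, Bf (W i) (xv f j)
        = if i = j then qf (xv f i) + c else 0 := by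
      intro i
      rw [hWdef]
      simp only
      rw [Bf_add_left, Bf_smul_left, Bf_smul_left, hxx f hk hM, hyx f hk hM]
      by_cases hij : i = j <;> simp [hij]
    simp_rw [h2] at h1
    rw [Finset.sum_ite_eq' univ j (fun i => qf (xv f i) + c), if_pos (Finset.mem_univ j)] at h1
    exact zmod2_cancel _ _ h1
  · have h1 : Bf (∑ i, W i) (yv f j) = 0 := by rw [hW0]; exact hBzero _
    rw [Bf_sum_left] at h1
    have h2 : ∀ i : Fin k, Bf (W i) (yv f j)
        = if i = j then qf (yv f i) + c else 0 := by
      intro i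
      rw [hWdef]
      simp only
      rw [Bf_add_left, Bf_smul_left, Bf_smul_left, hyy f hk hM, hxy f hk hM]
      by_cases hij : i = j <;> simp [hij]
    simp_rw [h2] at h1
    rw [Finset.sum_ite_eq' univ j (fun i => qf (yv f i) + c), if_pos (Finset.mem_univ j)] at h1
    exact zmod2_cancel _ _ h1

end Vals

lemma mainlem (hk : 1 ≤ k) (hd : ∀ i, Disjoint (f i).1 (f i).2)
    (hoddc : ∀ u v : Fin (2*k), u ≠ v → Odd (coversCount f u v)) :
    ∀ i, ((((f i).1.card : ℕ) : ZMod 2) = 1 ∧ (((f i).2.card : ℕ) : ZMod 2) = 1) ∧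
      (((f i).1.card.choose 2 : ℕ) : ZMod 2) = (k : ZMod 2) + 1 ∧
      (((f i).2.card.choose 2 : ℕ) : ZMod 2) = (k : ZMod 2) + 1 := by
  have hM := hMcover f hd hoddc
  refine fun i => ⟨hcx f hk hd hM i, ?_, ?_⟩
  · have h := (hab f hk hd hM i).1
    rwa [qf, suppF_xv] at h
  · have h := (hab f hk hd hM i).2
    rwa [qf, suppF_yv] at h

end Main

lemma final_convert (c k' : ℕ) (hc : ((c : ℕ) : ZMod 2) = 1)
    (hq : ((c.choose 2 : ℕ) : ZMod 2) = (k' : ZMod 2) + 1) :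
    (k' % 2 = 1 → c % 4 = 1) ∧ (k' % 2 = 0 → c % 4 = 3) := by
  rw [choose2_zmod, ← castmod2 k'] at hq
  rw [← castmod2 c] at hc
  have hc2 : c % 2 = 1 := by
    rcases Nat.mod_two_eq_zero_or_one c with h | h <;> rw [h] at hc
    · exact absurd hc (by decide)
    · exact h
  constructor
  · intro hk2
    rw [hk2, Nat.cast_one, show (1:ZMod 2) + 1 = 0 from by decide] at hq
    by_cases h4 : c % 4 ≤ 1
    · omega
    · rw [if_neg h4] at hq
      exact absurd hq (by decide)
  · intro hk2
    rw [hk2, Nat.cast_zero, zero_add] at hq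
    by_cases h4 : c % 4 ≤ 1
    · rw [if_pos h4] at hq
      exact absurd hq (by decide)
    · omega

end Stmt15Aux

/-- In a perfect odd cover `(X₁,Y₁),…,(X_k,Y_k)` of `K_{2k}`: if `k` is odd
then `|Xᵢ| ≡ |Yᵢ| ≡ 1 (mod 4)` for all `i`, and if `k` is even then
`|Xᵢ| ≡ |Yᵢ| ≡ 3 (mod 4)` for all `i`. -/
theorem stmt15 (k : ℕ) (hk : 1 ≤ k)
    (f : Fin k → Finset (Fin (2 * k)) × Finset (Fin (2 * k)))
    (hf : IsOddCover (⊤ : SimpleGraph (Fin (2 * k))) f) :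
    (Odd k → ∀ i, (f i).1.card % 4 = 1 ∧ (f i).2.card % 4 = 1) ∧
    (Even k → ∀ i, (f i).1.card % 4 = 3 ∧ (f i).2.card % 4 = 3) := by
  obtain ⟨hd, hcov⟩ := hf
  have hoddc : ∀ u v : Fin (2*k), u ≠ v → Odd (coversCount f u v) := fun u v huv =>
    (hcov u v huv).mp (by simpa using huv)
  have H := Stmt15Aux.mainlem f hk hd hoddc
  constructor
  · intro hko i
    have hk2 : k % 2 = 1 := Nat.odd_iff.mp hko
    obtain ⟨⟨hc1, hc2⟩, hq1, hq2⟩ := H i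
    exact ⟨(Stmt15Aux.final_convert _ k hc1 hq1).1 hk2,
      (Stmt15Aux.final_convert _ k hc2 hq2).1 hk2⟩
  · intro hke i
    have hk2 : k % 2 = 0 := Nat.even_iff.mp hke
    obtain ⟨⟨hc1, hc2⟩, hq1, hq2⟩ := H i
    exact ⟨(Stmt15Aux.final_convert _ k hc1 hq1).2 hk2,
      (Stmt15Aux.final_convert _ k hc2 hq2).2 hk2⟩
end

section
/- Let k ≥ 1 and let {(X_1, Y_1), …, (X_k, Y_k)} be the partite-set pairs of k bicliques forming a perfect odd cover of the complete graph K_{2k}. Then for all i, j ∈ {1, …, k} with i ≠ j, the cardinalities |X_i ∩ X_j|, |X_i ∩ Y_j|, and |Y_i ∩ Y_j| are all odd. -/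
open Finset

open Matrix

lemma odd_of_zmod2 {n : ℕ} (h : (n : ZMod 2) = 1) : Odd n := by
  rw [Nat.odd_iff]
  have := congrArg ZMod.val h
  rwa [ZMod.val_natCast, ZMod.val_one] at this

lemma zmod2_one_of_odd {n : ℕ} (h : Odd n) : (n : ZMod 2) = 1 := by
  obtain ⟨m, rfl⟩ := h
  push_cast
  have : (2 : ZMod 2) = 0 := by decide
  rw [this]; ring

lemma zmod2_mul_eq_one {u v : ZMod 2} (h : u * v = 1) : u = 1 ∧ v = 1 := by
  revert h; revert u v; decide

lemma zmod2_add_one_eq_zero {x : ZMod 2} (h : x + 1 = 0) : x = 1 := by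
  revert h; revert x; decide

/-- In a perfect odd cover `(X₁,Y₁),…,(X_k,Y_k)` of `K_{2k}`, for all
`i ≠ j`, the cardinalities `|Xᵢ ∩ Xⱼ|`, `|Xᵢ ∩ Yⱼ|` and `|Yᵢ ∩ Yⱼ|` are all odd. -/
theorem stmt16 (k : ℕ) (hk : 1 ≤ k)
    (f : Fin k → Finset (Fin (2 * k)) × Finset (Fin (2 * k)))
    (hf : IsOddCover (⊤ : SimpleGraph (Fin (2 * k))) f) :
    ∀ i j : Fin k, i ≠ j →
      Odd ((f i).1 ∩ (f j).1).card ∧ Odd ((f i).1 ∩ (f j).2).card ∧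
        Odd ((f i).2 ∩ (f j).2).card := by
  classical
  obtain ⟨hdisj, hcov⟩ := hf
  set S : Fin k × Bool → Finset (Fin (2 * k)) :=
    fun a => if a.2 then (f a.1).2 else (f a.1).1 with hS
  set X : Matrix (Fin (2 * k)) (Fin k × Bool) (ZMod 2) :=
    fun v a => if v ∈ S a then 1 else 0 with hX
  set A : Matrix (Fin k × Bool) (Fin k × Bool) (ZMod 2) :=
    fun a b => if a = (b.1, !b.2) then 1 else 0 with hA
  set J : Matrix (Fin (2 * k)) (Fin (2 * k)) (ZMod 2) :=
    fun _ _ => 1 with hJ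
  set M : Matrix (Fin (2 * k)) (Fin (2 * k)) (ZMod 2) := 1 + J with hM
  -- column sums
  have hcol : ∀ c : Fin k × Bool, (∑ v, X v c) = ((S c).card : ZMod 2) := by
    intro c
    rw [hX]
    rw [Finset.sum_ite_mem, Finset.univ_inter, Finset.sum_const, nsmul_eq_mul, mul_one]
  -- X * A swaps columns
  have hXA : ∀ v b, (X * A) v b = X v (b.1, !b.2) := by
    intro v b
    rw [Matrix.mul_apply]
    simp [hA, mul_ite, mul_one, mul_zero, Finset.sum_ite_eq']
  -- the main matrix identity
  have hMeq : X * A * Xᵀ = M := by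
    ext u v
    rw [Matrix.mul_apply]
    simp only [Matrix.transpose_apply, hXA]
    rw [Fintype.sum_prod_type]
    have hterm : ∀ i : Fin k,
        (∑ c : Bool, X u (i, !c) * X v (i, c)) =
          if (u ∈ (f i).1 ∧ v ∈ (f i).2) ∨ (u ∈ (f i).2 ∧ v ∈ (f i).1) then (1 : ZMod 2) else 0 := by
      intro i
      have hd := Finset.disjoint_left.mp (hdisj i)
      rw [Fintype.sum_bool]
      by_cases h1 : u ∈ (f i).1 <;> by_cases h2 : u ∈ (f i).2 <;>
        by_cases h3 : v ∈ (f i).1 <;> by_cases h4 : v ∈ (f i).2 <;>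
        first
          | exact absurd h2 (hd h1)
          | exact absurd h4 (hd h3)
          | simp [hX, hS, h1, h2, h3, h4]
    rw [Finset.sum_congr rfl fun i _ => hterm i]
    rw [Finset.sum_boole]
    have hcc : coversCount f u v =
        (Finset.univ.filter fun i : Fin k =>
          (u ∈ (f i).1 ∧ v ∈ (f i).2) ∨ (u ∈ (f i).2 ∧ v ∈ (f i).1)).card := by
      rw [coversCount, Nat.card_eq_fintype_card, Fintype.card_subtype]
    by_cases huv : u = v
    · subst huv
      have : ∀ i : Fin k, ¬((u ∈ (f i).1 ∧ u ∈ (f i).2) ∨ (u ∈ (f i).2 ∧ u ∈ (f i).1)) := by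
        intro i
        have hd := Finset.disjoint_left.mp (hdisj i)
        rintro (⟨h1, h2⟩ | ⟨h2, h1⟩) <;> exact hd h1 h2
      rw [Finset.filter_false_of_mem fun i _ => this i]
      simp [hM, hJ, Matrix.add_apply, Matrix.one_apply]
      change (0 : ZMod 2) = (1 : Matrix (Fin (2 * k)) (Fin (2 * k)) (ZMod 2)) u u + 1
      rw [Matrix.one_apply_eq]
      decide
    · have hodd : Odd (coversCount f u v) := (hcov u v huv).mp (by simp [huv])
      rw [hcc] at hodd
      rw [zmod2_one_of_odd hodd]
      simp [hM, hJ, Matrix.add_apply, Matrix.one_apply, huv]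
      change (1 : ZMod 2) = (1 : Matrix (Fin (2 * k)) (Fin (2 * k)) (ZMod 2)) u v + 1
      rw [Matrix.one_apply_ne huv]
      simp
  -- J * J = 0 and M * M = 1
  have hJJ : J * J = 0 := by
    ext u v
    rw [Matrix.mul_apply]
    simp only [hJ, mul_one, Finset.sum_const, Finset.card_univ, Fintype.card_fin,
      nsmul_eq_mul, mul_one, Matrix.zero_apply]
    rw [Nat.cast_mul]
    have : ((2 : ℕ) : ZMod 2) = 0 := by decide
    rw [this, zero_mul]
  have hJ2 : J + J = 0 := by
    ext u v
    simp only [hJ, Matrix.add_apply, Matrix.zero_apply]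
    change (1 : ZMod 2) + 1 = 0
    decide
  have hMM : M * M = 1 := by
    rw [hM, mul_add, add_mul, add_mul, hJJ]
    simp only [one_mul, mul_one, add_zero]
    rw [add_assoc, hJ2, add_zero]
  -- invertibility bookkeeping
  have hcard : Fintype.card (Fin (2 * k)) = Fintype.card (Fin k × Bool) := by
    simp [mul_comm]
  let e : Fin (2 * k) ≃ Fin k × Bool := Fintype.equivOfCardEq hcard
  have hXB : X * (A * Xᵀ * M) = 1 := by
    calc X * (A * Xᵀ * M) = (X * A * Xᵀ) * M := by
          simp only [Matrix.mul_assoc]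
      _ = M * M := by rw [hMeq]
      _ = 1 := hMM
  have hBX : (A * Xᵀ * M) * X = 1 := (Matrix.mul_eq_one_comm_of_equiv e).mp hXB
  have hAA : A * A = 1 := by
    ext a c
    rw [Matrix.mul_apply]
    simp only [hA, ite_mul, one_mul, zero_mul]
    have hpt : ∀ x : Fin k × Bool,
        (if a = (x.1, !x.2) then (if x = (c.1, !c.2) then (1 : ZMod 2) else 0) else 0)
          = if x = (a.1, !a.2) then (if x = (c.1, !c.2) then (1 : ZMod 2) else 0) else 0 := by
      intro x
      have hiff : a = (x.1, !x.2) ↔ x = (a.1, !a.2) := by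
        constructor
        · rintro rfl; simp
        · rintro rfl; simp
      simp only [hiff]
    rw [Finset.sum_congr rfl fun x _ => hpt x, Finset.sum_ite_eq']
    simp only [Finset.mem_univ, if_true, Matrix.one_apply]
    by_cases hac : a = c
    · subst hac; simp
    · have : (a.1, !a.2) ≠ (c.1, !c.2) := by
        intro h
        obtain ⟨h1, h2⟩ := Prod.mk.inj h
        exact hac (Prod.ext h1 (Bool.not_inj h2))
      simp [this, hac]
  have hG : Xᵀ * M * X = A := by
    have h1 : A * (Xᵀ * M * X) = 1 := by
      calc A * (Xᵀ * M * X) = (A * Xᵀ * M) * X := by simp only [Matrix.mul_assoc]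
        _ = 1 := hBX
    calc Xᵀ * M * X = (A * A) * (Xᵀ * M * X) := by rw [hAA, one_mul]
      _ = A * (A * (Xᵀ * M * X)) := by rw [Matrix.mul_assoc]
      _ = A * 1 := by rw [h1]
      _ = A := mul_one A
  -- entrywise consequence
  have key : ∀ a b : Fin k × Bool,
      ((S a ∩ S b).card : ZMod 2) + ((S a).card : ZMod 2) * ((S b).card : ZMod 2) = A a b := by
    intro a b
    have h2 : (Xᵀ * M * X) a b = A a b := by rw [hG]
    have e3 : Xᵀ * M * X = Xᵀ * X + Xᵀ * J * X := by
      rw [hM, Matrix.mul_add, Matrix.mul_one, Matrix.add_mul]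
    have e1 : (Xᵀ * X) a b = ((S a ∩ S b).card : ZMod 2) := by
      rw [Matrix.mul_apply]
      simp only [Matrix.transpose_apply, hX, ite_mul, one_mul, zero_mul]
      have : ∀ v : Fin (2 * k), (if v ∈ S a then (if v ∈ S b then (1 : ZMod 2) else 0) else 0)
          = if v ∈ S a ∩ S b then 1 else 0 := by
        intro v
        by_cases hva : v ∈ S a <;> by_cases hvb : v ∈ S b <;> simp [hva, hvb]
      change (∑ v : Fin (2 * k), (if v ∈ S a then (1 : ZMod 2) else 0) *
        (if v ∈ S b then (1 : ZMod 2) else 0)) = _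
      simp only [ite_mul, one_mul, zero_mul]
      rw [Finset.sum_congr rfl fun v _ => this v]
      rw [Finset.sum_ite_mem, Finset.univ_inter, Finset.sum_const, nsmul_eq_mul, mul_one]
    have e2 : (Xᵀ * J * X) a b = ((S a).card : ZMod 2) * ((S b).card : ZMod 2) := by
      have hXtJ : ∀ w, (Xᵀ * J) a w = ((S a).card : ZMod 2) := by
        intro w
        rw [Matrix.mul_apply]
        simp only [Matrix.transpose_apply, hJ, mul_one]
        exact hcol a
      rw [Matrix.mul_apply]
      rw [Finset.sum_congr rfl fun w _ => by rw [hXtJ w]]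
      rw [← Finset.mul_sum, hcol b]
    rw [e3, Matrix.add_apply, e1, e2] at h2
    exact h2
  -- all parts have odd cardinality
  have hones : ∀ a : Fin k × Bool, ((S a).card : ZMod 2) = 1 := by
    have base : ∀ i : Fin k,
        ((S (i, false)).card : ZMod 2) = 1 ∧ ((S (i, true)).card : ZMod 2) = 1 := by
      intro i
      have hk := key (i, false) (i, true)
      have hint : S (i, false) ∩ S (i, true) = ∅ := by
        rw [hS]
        simpa using Finset.disjoint_iff_inter_eq_empty.mp (hdisj i)
      rw [hint] at hk
      simp only [Finset.card_empty, Nat.cast_zero, zero_add] at hk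
      have hA1 : A (i, false) (i, true) = 1 := by simp [hA]
      rw [hA1] at hk
      exact zmod2_mul_eq_one hk
    intro a
    obtain ⟨i, b⟩ := a
    cases b
    · exact (base i).1
    · exact (base i).2
  have final : ∀ a b : Fin k × Bool, a.1 ≠ b.1 → Odd ((S a ∩ S b).card) := by
    intro a b hab
    have hk2 := key a b
    have hA0 : A a b = 0 := by
      have hne : a ≠ (b.1, !b.2) := by
        intro h
        exact hab (by rw [h])
      simp [hA, hne]
    rw [hA0, hones a, hones b, mul_one] at hk2
    exact odd_of_zmod2 (zmod2_add_one_eq_zero hk2)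
  intro i j hij
  have hij' : (i, false).1 ≠ (j, false).1 := hij
  refine ⟨?_, ?_, ?_⟩
  · simpa [hS] using final (i, false) (j, false) hij
  · simpa [hS] using final (i, false) (j, true) hij
  · simpa [hS] using final (i, true) (j, true) hij
end
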